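/- Let g(x) = max_{j∈J} g_j(x) with J finite and g_j ∈ C¹(X). Define D(x̄) as the collection of subsets D ⊆ J(x̄) for which the system ⟨∇g_j(x̄), d⟩ = 1 for j ∈ D and ⟨∇g_j(x̄), d⟩ < 1 for j ∈ J(x̄)\D is consistent for some d ∈ ℝⁿ. Then ⋃_{D∈D(x̄)} conv{ ∇g_j(x̄) : j ∈ D } = ⋃_{p∈S, g'(x̄;p)>0} Argmax_{v∈∂g(x̄)} ⟨v,p⟩. -/

import Mathlib

open Filter Topology Set Metric
open scoped RealInnerProductSpace

noncomputable section

/-- `n`-dimensional Euclidean space. -/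
abbrev En (n : ℕ) := EuclideanSpace ℝ (Fin n)

/-- `d` is the Hadamard directional derivative map of `f` at `x`:
for each direction `p`, `(f (x + t • p') - f x)/t → d p` as `t ↓ 0`, `p' → p`. -/
def HadamardDD {n : ℕ} (f : En n → ℝ) (x : En n) (d : En n → ℝ) : Prop :=
  ∀ p : En n,
    Tendsto (fun q : ℝ × En n => (f (x + q.1 • q.2) - f x) / q.1)
      ((𝓝[>] (0 : ℝ)) ×ˢ 𝓝 p) (𝓝 (d p))

/-- The Fréchet subdifferential of `f` at `x`. -/
def FSubdiff {n : ℕ} (f : En n → ℝ) (x : En n) : Set (En n) :=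
  {v | ∀ ε > (0 : ℝ), ∀ᶠ y in 𝓝 x, f y - f x - ⟪v, y - x⟫ ≥ -ε * ‖y - x‖}

/-- The outer (Painlevé–Kuratowski) limit of Fréchet subdifferentials of `f`
along sequences `x_k → xb` with `f x_k > f xb`. -/
def OuterLim {n : ℕ} (f : En n → ℝ) (xb : En n) : Set (En n) :=
  {y | ∃ xk yk : ℕ → En n, Tendsto xk atTop (𝓝 xb) ∧ (∀ k, f xb < f (xk k)) ∧
    (∀ k, yk k ∈ FSubdiff f (xk k)) ∧ Tendsto yk atTop (𝓝 y)}

lemma mem_convexHull_face {E : Type*} [NormedAddCommGroup E] [InnerProductSpace ℝ E]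
    (s : Finset E) (p : E) (M : ℝ) (hb : ∀ x ∈ s, ⟪x, p⟫ ≤ M)
    {u : E} (hu : u ∈ convexHull ℝ (s : Set E)) (hM : M ≤ ⟪u, p⟫) :
    u ∈ convexHull ℝ {x ∈ (s : Set E) | ⟪x, p⟫ = M} := by
  classical
  rw [Finset.convexHull_eq] at hu
  obtain ⟨w, hw0, hw1, hwc⟩ := hu
  have hrep : u = ∑ y ∈ s, w y • y := by
    rw [← hwc, Finset.centerMass_eq_of_sum_1 _ _ hw1]
    simp
  have hip : ⟪u, p⟫ = ∑ y ∈ s, w y * ⟪y, p⟫ := by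
    rw [hrep, sum_inner]
    simp [real_inner_smul_left]
  have hsum0 : ∑ y ∈ s, w y * (M - ⟪y, p⟫) = M - ⟪u, p⟫ := by
    rw [hip]
    simp only [mul_sub, Finset.sum_sub_distrib, ← Finset.sum_mul, hw1]
    ring
  have hterm0 : ∀ y ∈ s, w y * (M - ⟪y, p⟫) = 0 := by
    have hnn : ∀ y ∈ s, 0 ≤ w y * (M - ⟪y, p⟫) :=
      fun y hy => mul_nonneg (hw0 y hy) (sub_nonneg.2 (hb y hy))
    have : ∑ y ∈ s, w y * (M - ⟪y, p⟫) = 0 :=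
      le_antisymm (hsum0 ▸ sub_nonpos.2 hM) (Finset.sum_nonneg hnn)
    exact (Finset.sum_eq_zero_iff_of_nonneg hnn).1 this
  set t : Finset E := s.filter (fun y => ⟪y, p⟫ = M) with ht
  have hw0' : ∀ y ∈ s, y ∉ t → w y = 0 := by
    intro y hy hyt
    rcases mul_eq_zero.1 (hterm0 y hy) with h | h
    · exact h
    · exact absurd (Finset.mem_filter.2 ⟨hy, by linarith [sub_eq_zero.1 h]⟩) hyt
  have hsum' : ∑ y ∈ t, w y = 1 := by
    rw [Finset.sum_subset (Finset.filter_subset _ s) (fun y hy hyt => hw0' y hy hyt), hw1]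
  have hrep' : u = ∑ y ∈ t, w y • y := by
    rw [hrep, Finset.sum_subset (Finset.filter_subset _ s)
      (fun y hy hyt => by rw [hw0' y hy hyt, zero_smul])]
  have : u = t.centerMass w id := by
    rw [Finset.centerMass_eq_of_sum_1 _ _ hsum']
    simpa using hrep'
  rw [this]
  refine Finset.centerMass_mem_convexHull t (fun y hy => hw0 y (Finset.filter_subset _ s hy))
    (by rw [hsum']; norm_num) (fun y hy => ?_)
  rcases Finset.mem_filter.1 hy with ⟨hys, hyM⟩
  exact ⟨Finset.mem_coe.2 hys, hyM⟩


/-- description of the union of support faces of `∂g(xb)` exposed by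
directions with positive directional derivative via consistent index subsets `D(xb)`. -/
theorem union_convexHull_eq_union_argmax {n : ℕ} {ι : Type*} [Fintype ι]
    (X : Set (En n)) (hX : IsOpen X)
    (gj : ι → En n → ℝ) (hC1 : ∀ j, ContDiffOn ℝ 1 (gj j) X)
    (g : En n → ℝ)
    (hg : ∀ x : En n, IsGreatest (Set.range fun j => gj j x) (g x))
    (xb : En n) (hxb : xb ∈ X) :
    (⋃ D ∈ {D : Set ι | D ⊆ {j : ι | gj j xb = g xb} ∧
        ∃ dvec : En n, (∀ j ∈ D, ⟪gradient (gj j) xb, dvec⟫ = 1) ∧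
          ∀ j ∈ {j : ι | gj j xb = g xb} \ D, ⟪gradient (gj j) xb, dvec⟫ < 1},
      convexHull ℝ ((fun j => gradient (gj j) xb) '' D))
    =
    ⋃ p ∈ {p : En n | ‖p‖ = 1 ∧ ∃ j : ι, gj j xb = g xb ∧ 0 < ⟪gradient (gj j) xb, p⟫},
      {v ∈ convexHull ℝ ((fun j => gradient (gj j) xb) '' {j : ι | gj j xb = g xb}) |
        ∀ w ∈ convexHull ℝ ((fun j => gradient (gj j) xb) '' {j : ι | gj j xb = g xb}),
          ⟪w, p⟫ ≤ ⟪v, p⟫} := by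
  classical
  set v : ι → En n := fun j => gradient (gj j) xb with hv
  set A : Set ι := {j : ι | gj j xb = g xb} with hA
  have hlin : ∀ p : En n, IsLinearMap ℝ (fun w : En n => ⟪w, p⟫) :=
    fun p => ⟨fun x y => inner_add_left x y p, fun c x => real_inner_smul_left x p c⟩
  ext u
  simp only [Set.mem_iUnion, Set.mem_setOf_eq, Set.mem_sep_iff]
  constructor
  · rintro ⟨D, ⟨hDA, d, hd1, hd2⟩, hu⟩
    -- D is nonempty
    have hDne : ((fun j => v j) '' D).Nonempty := by
      by_contra h
      rw [Set.not_nonempty_iff_eq_empty] at h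
      rw [h, convexHull_empty] at hu
      exact hu
    obtain ⟨_, j0, hj0D, rfl⟩ := hDne
    have hd0 : d ≠ 0 := by
      intro h
      have := hd1 j0 hj0D
      rw [h, inner_zero_right] at this
      norm_num at this
    set c : ℝ := ‖d‖⁻¹ with hc
    have hcpos : 0 < c := inv_pos.2 (norm_pos_iff.2 hd0)
    set p : En n := c • d with hp
    have hinner : ∀ x : En n, ⟪x, p⟫ = c * ⟪x, d⟫ := fun x => real_inner_smul_right x d c
    refine ⟨p, ⟨?_, j0, hDA hj0D, ?_⟩, ?_, ?_⟩
    · rw [hp, norm_smul, hc]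
      simp [norm_inv, inv_mul_cancel₀ (norm_ne_zero_iff.2 hd0)]
    · rw [hinner, hd1 j0 hj0D, mul_one]; exact hcpos
    · exact convexHull_mono (Set.image_mono hDA) hu
    · have hup : ⟪u, p⟫ = c := by
        have : convexHull ℝ ((fun j => v j) '' D) ⊆ {w : En n | ⟪w, p⟫ = c} := by
          apply convexHull_min _ (convex_hyperplane (hlin p) c)
          rintro _ ⟨j, hjD, rfl⟩
          simp only [Set.mem_setOf_eq, hinner, show ⟪v j, d⟫ = 1 from hd1 j hjD, mul_one]
        exact this hu
      intro w hw
      rw [hup]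
      have : convexHull ℝ ((fun j => v j) '' A) ⊆ {w : En n | ⟪w, p⟫ ≤ c} := by
        apply convexHull_min _ (convex_halfSpace_le (hlin p) c)
        rintro _ ⟨j, hjA, rfl⟩
        simp only [Set.mem_setOf_eq, hinner]
        by_cases hjD : j ∈ D
        · rw [hd1 j hjD, mul_one]
        · have := hd2 j ⟨hjA, hjD⟩
          calc c * ⟪v j, d⟫ ≤ c * 1 := by
                exact mul_le_mul_of_nonneg_left this.le hcpos.le
            _ = c := mul_one c
      exact this hw
  · rintro ⟨p, ⟨hp1, j1, hj1A, hj1pos⟩, huC, humax⟩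
    set sA : Finset ι := Finset.univ.filter (fun j => j ∈ A) with hsA
    have hj1s : j1 ∈ sA := Finset.mem_filter.2 ⟨Finset.mem_univ _, hj1A⟩
    have hsAne : sA.Nonempty := ⟨j1, hj1s⟩
    set M : ℝ := sA.sup' hsAne (fun j => ⟪v j, p⟫) with hM
    have hMpos : 0 < M := lt_of_lt_of_le hj1pos (Finset.le_sup' (f := fun j => ⟪v j, p⟫) hj1s)
    obtain ⟨jm, hjms, hjmM⟩ := Finset.exists_mem_eq_sup' hsAne (fun j => ⟪v j, p⟫)
    have hjmA : jm ∈ A := (Finset.mem_filter.1 hjms).2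
    have hle : ∀ j ∈ A, ⟪v j, p⟫ ≤ M :=
      fun j hj => Finset.le_sup' (f := fun j => ⟪v j, p⟫)
        (Finset.mem_filter.2 ⟨Finset.mem_univ _, hj⟩)
    set D : Set ι := {j ∈ A | ⟪v j, p⟫ = M} with hD
    refine ⟨D, ⟨fun j hj => hj.1, M⁻¹ • p, ?_, ?_⟩, ?_⟩
    · intro j hj
      rw [real_inner_smul_right, hj.2, inv_mul_cancel₀ hMpos.ne']
    · rintro j ⟨hjA, hjD⟩
      have hlt : ⟪v j, p⟫ < M :=
        lt_of_le_of_ne (hle j hjA) (fun h => hjD ⟨hjA, h⟩)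
      rw [real_inner_smul_right]
      calc M⁻¹ * ⟪v j, p⟫ < M⁻¹ * M := by
            exact mul_lt_mul_of_pos_left hlt (inv_pos.2 hMpos)
        _ = 1 := inv_mul_cancel₀ hMpos.ne'
    · -- u is in the convex hull of the face
      set t : Finset (En n) := sA.image (fun j => v j) with htdef
      have hcoe : (fun j => v j) '' A = (t : Set (En n)) := by
        ext x
        simp [htdef, hsA, Set.mem_image]
      have hb : ∀ x ∈ t, ⟪x, p⟫ ≤ M := by
        intro x hx
        obtain ⟨j, hjs, rfl⟩ := Finset.mem_image.1 hx
        exact hle j (Finset.mem_filter.1 hjs).2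
      have huM : M ≤ ⟪u, p⟫ := by
        rw [hM, hjmM]
        exact humax (v jm) (subset_convexHull ℝ _ ⟨jm, hjmA, rfl⟩)
      have hu' : u ∈ convexHull ℝ (t : Set (En n)) := by rw [← hcoe]; exact huC
      have := mem_convexHull_face t p M hb hu' huM
      refine convexHull_mono ?_ this
      rintro x ⟨hxt, hxM⟩
      obtain ⟨j, hjs, rfl⟩ := Finset.mem_image.1 (Finset.mem_coe.1 hxt)
      exact ⟨j, ⟨(Finset.mem_filter.1 hjs).2, hxM⟩, rfl⟩
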